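/- Let G = (V,E) be a finite connected graph, F a spanning tree of G, and T ⊆ V with |T| even. Then there is exactly one subset J ⊆ F that is a T-join of G. -/

import Mathlib

open scoped Classical
open Finset

noncomputable section

variable {V : Type*} [Fintype V] [DecidableEq V]

/-- The edge set of a graph as a `Finset` of `Sym2 V`. -/
def edgesOf (G : SimpleGraph V) : Finset (Sym2 V) :=
  Finset.univ.filter (fun e => e ∈ G.edgeSet)

/-- Degree of a vertex in a set of edges. -/
def degOn (J : Finset (Sym2 V)) (v : V) : ℕ :=
  (J.filter (fun e => v ∈ e)).card

/-- The set of vertices of odd degree in a set of edges. -/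
def oddVerts (J : Finset (Sym2 V)) : Finset V :=
  Finset.univ.filter (fun v => Odd (degOn J v))

/-- `J` is a `T`-join of `G`: a set of edges of `G` whose odd-degree vertex set is `T`. -/
def IsTJoin (G : SimpleGraph V) (T : Finset V) (J : Finset (Sym2 V)) : Prop :=
  J ⊆ edgesOf G ∧ oddVerts J = T

/-- `F` is a spanning tree of `G`: edges of `G`, connected, with `|V| - 1` edges. -/
def IsSpanningTree (G : SimpleGraph V) (F : Finset (Sym2 V)) : Prop :=
  F ⊆ edgesOf G ∧ (SimpleGraph.fromEdgeSet (F : Set (Sym2 V))).Connected ∧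
    F.card + 1 = Fintype.card V

/-- δ(W): the set of edges of `G` with exactly one endpoint in `W`. -/
def cutEdges (G : SimpleGraph V) (W : Finset V) : Finset (Sym2 V) :=
  (edgesOf G).filter (fun e => ∃ u v, e = s(u, v) ∧ u ∈ W ∧ v ∉ W)

/-- `𝒲` is a partition of the vertex set `V`. -/
def IsPartitionOf (𝒲 : Finset (Finset V)) : Prop :=
  (∀ W ∈ 𝒲, W.Nonempty) ∧
  (∀ W₁ ∈ 𝒲, ∀ W₂ ∈ 𝒲, W₁ ≠ W₂ → Disjoint W₁ W₂) ∧
  (∀ v : V, ∃ W ∈ 𝒲, v ∈ W)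

/-- δ(𝒲): the set of edges of `G` whose endpoints lie in different classes of `𝒲`. -/
def partitionCut (G : SimpleGraph V) (𝒲 : Finset (Finset V)) : Finset (Sym2 V) :=
  (edgesOf G).filter (fun e => ¬ ∃ W ∈ 𝒲, ∀ v ∈ e, v ∈ W)

/-- `x(A) = Σ_{e ∈ A} x(e)`. -/
def xval (x : Sym2 V → ℝ) (A : Finset (Sym2 V)) : ℝ := ∑ e ∈ A, x e

/-- `cᵀx`, summed over the edges of `G`. -/
def dotE (G : SimpleGraph V) (c x : Sym2 V → ℝ) : ℝ := ∑ e ∈ edgesOf G, c e * x e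

/-- Membership in the polyhedron `P(G,T)`. -/
def memP (G : SimpleGraph V) (T : Finset V) (x : Sym2 V → ℝ) : Prop :=
  (∀ W : Finset V, W.Nonempty → W ≠ Finset.univ → Even ((W ∩ T).card) →
      2 ≤ xval x (cutEdges G W)) ∧
  (∀ 𝒲 : Finset (Finset V), IsPartitionOf 𝒲 →
      (𝒲.card : ℝ) - 1 ≤ xval x (partitionCut G 𝒲)) ∧
  (∀ e ∈ edgesOf G, 0 ≤ x e ∧ x e ≤ 2)

/-- `m` (an edge multiplicity vector, values in `{0,1,2}`) is a `T`-tour of `G`: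
its support consists of edges of `G`, the support spans a connected graph on `V`,
and the vertices of odd degree (with multiplicities) are exactly `T`. -/
def IsTTour (G : SimpleGraph V) (T : Finset V) (m : Sym2 V → ℕ) : Prop :=
  (∀ e, 0 < m e → e ∈ G.edgeSet) ∧ (∀ e, m e ≤ 2) ∧
  (SimpleGraph.fromEdgeSet {e | 0 < m e}).Connected ∧
  (∀ v : V, (Odd (∑ e ∈ edgesOf G, if v ∈ e then m e else 0) ↔ v ∈ T))

/-- The `c`-length of a multiset of edges given by multiplicities `m`. -/
def tourCost (G : SimpleGraph V) (c : Sym2 V → ℝ) (m : Sym2 V → ℕ) : ℝ :=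
  ∑ e ∈ edgesOf G, (m e : ℝ) * c e

/-- `opt(G,T,c)`: the minimum `c`-length of a `T`-tour. -/
def optLen (G : SimpleGraph V) (T : Finset V) (c : Sym2 V → ℝ) : ℝ :=
  sInf {L : ℝ | ∃ m, IsTTour G T m ∧ L = tourCost G c m}

/-- The `c`-length of a set of edges. -/
def setCost (c : Sym2 V → ℝ) (J : Finset (Sym2 V)) : ℝ := ∑ e ∈ J, c e

/-- `τ(G,T',c)`: the minimum `c`-length of a `T'`-join. -/
def tau (G : SimpleGraph V) (T' : Finset V) (c : Sym2 V → ℝ) : ℝ :=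
  sInf {L : ℝ | ∃ J, IsTJoin G T' J ∧ L = setCost c J}

/-- Membership in `Q₊(G,T')`: nonnegative and at least `1` on every `T'`-cut. -/
def memQplus (G : SimpleGraph V) (T' : Finset V) (x : Sym2 V → ℝ) : Prop :=
  (∀ e ∈ edgesOf G, 0 ≤ x e) ∧
  (∀ W : Finset V, W.Nonempty → W ≠ Finset.univ → Odd ((W ∩ T').card) →
      1 ≤ xval x (cutEdges G W))

/-- Symmetric difference of two finite sets. -/
def symDiff (A B : Finset V) : Finset V := (A \ B) ∪ (B \ A)

/-- `p*(e) = Σ_{F ∈ 𝓕, e ∈ F(T)} λ_F`, where `JT F` plays the role of `F(T)`. -/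
def pstar (𝓕 : Finset (Finset (Sym2 V))) (lam : Finset (Sym2 V) → ℝ)
    (JT : Finset (Sym2 V) → Finset (Sym2 V)) (e : Sym2 V) : ℝ :=
  ∑ F ∈ 𝓕.filter (fun F => e ∈ JT F), lam F

/-- `q*(e) = Σ_{F ∈ 𝓕, e ∈ F ∖ F(T)} λ_F`. -/
def qstar (𝓕 : Finset (Finset (Sym2 V))) (lam : Finset (Sym2 V) → ℝ)
    (JT : Finset (Sym2 V) → Finset (Sym2 V)) (e : Sym2 V) : ℝ :=
  ∑ F ∈ 𝓕.filter (fun F => e ∈ F \ JT F), lam F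

/-- `𝒬`: the family of cuts `Q` of `G` (as edge sets) with `x*(Q) < 2`. -/
def Qset (G : SimpleGraph V) (xstar : Sym2 V → ℝ) : Finset (Finset (Sym2 V)) :=
  Finset.univ.filter (fun C : Finset (Sym2 V) =>
    (∃ W : Finset V, W.Nonempty ∧ W ≠ Finset.univ ∧ C = cutEdges G W) ∧ xval xstar C < 2)

/-- `x^Q(e) = Σ_{F ∈ 𝓕, Q ∩ F = {e}} λ_F`. -/
def xQ (𝓕 : Finset (Finset (Sym2 V))) (lam : Finset (Sym2 V) → ℝ)
    (C : Finset (Sym2 V)) (e : Sym2 V) : ℝ :=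
  ∑ F ∈ 𝓕.filter (fun F => C ∩ F = {e}), lam F

/-- `f^Q(β) = max {0, (4β - 1 - β x*(Q)) / (2 - x*(Q))}`. -/
def fQ (xstar : Sym2 V → ℝ) (β : ℝ) (C : Finset (Sym2 V)) : ℝ :=
  max 0 ((4 * β - 1 - β * xval xstar C) / (2 - xval xstar C))

/-- `s^F(β) = Σ_{Q ∈ 𝒬, |Q ∩ F| ≥ 2} f^Q(β) x^Q`. -/
def sF (G : SimpleGraph V) (xstar : Sym2 V → ℝ) (𝓕 : Finset (Finset (Sym2 V)))
    (lam : Finset (Sym2 V) → ℝ) (β : ℝ) (F : Finset (Sym2 V)) (e : Sym2 V) : ℝ :=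
  ∑ C ∈ (Qset G xstar).filter (fun C => 2 ≤ (C ∩ F).card), fQ xstar β C * xQ 𝓕 lam C e

end
section MyAux

open scoped symmDiff

variable {V : Type*} [Fintype V] [DecidableEq V]

lemma myCard_symmDiff_cast {α : Type*} [DecidableEq α] (s t : Finset α) :
    (((s ∆ t).card : ZMod 2)) = s.card + t.card := by
  have h2 : Disjoint (s ∆ t) (s ∩ t) := disjoint_symmDiff_inf s t
  have h3 : (s ∆ t).card + (s ∩ t).card = (s ∪ t).card := by
    rw [← Finset.card_union_of_disjoint h2]
    congr 1
    exact symmDiff_sup_inf s t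
  have h4 : (s ∪ t).card + (s ∩ t).card = s.card + t.card :=
    Finset.card_union_add_card_inter s t
  have h5 : (s ∆ t).card + 2 * (s ∩ t).card = s.card + t.card := by omega
  have := congrArg (Nat.cast : ℕ → ZMod 2) h5
  push_cast at this
  rw [show ((2 : ZMod 2)) = 0 from rfl] at this
  simpa using this

lemma myFilter_symmDiff {α : Type*} [DecidableEq α] (p : α → Prop) [DecidablePred p]
    (s t : Finset α) : (s ∆ t).filter p = s.filter p ∆ t.filter p := by
  ext a
  simp only [Finset.mem_filter, Finset.mem_symmDiff]
  tauto

lemma myDegOn_symmDiff_cast (A B : Finset (Sym2 V)) (v : V) :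
    ((degOn (A ∆ B) v : ZMod 2)) = degOn A v + degOn B v := by
  unfold degOn
  rw [myFilter_symmDiff]
  exact myCard_symmDiff_cast _ _

lemma myMem_oddVerts {J : Finset (Sym2 V)} {v : V} :
    v ∈ oddVerts J ↔ Odd (degOn J v) := by
  simp [oddVerts]

lemma myOddVerts_symmDiff (A B : Finset (Sym2 V)) :
    oddVerts (A ∆ B) = oddVerts A ∆ oddVerts B := by
  ext v
  rw [Finset.mem_symmDiff, myMem_oddVerts, myMem_oddVerts, myMem_oddVerts,
    ← ZMod.natCast_eq_one_iff_odd, ← ZMod.natCast_eq_one_iff_odd, ← ZMod.natCast_eq_one_iff_odd,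
    myDegOn_symmDiff_cast]
  generalize (degOn A v : ZMod 2) = x
  generalize (degOn B v : ZMod 2) = y
  revert x y
  decide

lemma myOddVerts_empty : oddVerts (∅ : Finset (Sym2 V)) = ∅ := by
  simp [oddVerts, degOn, Nat.odd_iff]

lemma myDegOn_singleton (e : Sym2 V) (v : V) :
    degOn {e} v = if v ∈ e then 1 else 0 := by
  simp only [degOn, Finset.filter_singleton]
  split <;> simp

lemma myOddVerts_singleton {a b : V} (h : a ≠ b) :
    oddVerts ({s(a, b)} : Finset (Sym2 V)) = {a, b} := by
  ext v
  rw [myMem_oddVerts, myDegOn_singleton]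
  by_cases hv : v ∈ s(a, b) <;>
    simp_all [Sym2.mem_iff, Nat.odd_iff, Finset.mem_insert]

end MyAux

section MyAux2

open scoped symmDiff

variable {V : Type*} [Fintype V] [DecidableEq V]

lemma myOddVerts_walk {G' : SimpleGraph V} {u v : V} (p : G'.Walk u v) :
    p.IsPath → u ≠ v → oddVerts p.edges.toFinset = {u, v} := by
  induction p with
  | nil => exact fun _ huv => absurd rfl huv
  | @cons u w v h q ih =>
    intro hp huv
    obtain ⟨hq, hu⟩ := (SimpleGraph.Walk.cons_isPath_iff h q).mp hp
    by_cases hwv : w = v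
    · subst hwv
      have : q = SimpleGraph.Walk.nil := (SimpleGraph.Walk.isPath_iff_eq_nil (p := q)).mp hq
      subst this
      simp only [SimpleGraph.Walk.edges_cons, SimpleGraph.Walk.edges_nil,
        List.toFinset_cons, List.toFinset_nil, LawfulSingleton.insert_empty_eq]
      exact myOddVerts_singleton h.ne
    · have ih' := ih hq hwv
      have hnotin : s(u, w) ∉ q.edges.toFinset := by
        intro hmem
        exact hu (SimpleGraph.Walk.fst_mem_support_of_mem_edges q
          (List.mem_toFinset.mp hmem))
      have hins : (SimpleGraph.Walk.cons h q).edges.toFinset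
          = ({s(u, w)} : Finset (Sym2 V)) ∆ q.edges.toFinset := by
        ext e
        simp only [SimpleGraph.Walk.edges_cons, List.toFinset_cons, Finset.mem_insert,
          Finset.mem_symmDiff, Finset.mem_singleton]
        constructor
        · rintro (rfl | he)
          · exact Or.inl ⟨rfl, hnotin⟩
          · by_cases heq : e = s(u, w)
            · exact Or.inl ⟨heq, fun hh => (heq ▸ hnotin) hh⟩
            · exact Or.inr ⟨he, heq⟩
        · rintro (⟨rfl, _⟩ | ⟨he, _⟩)
          · exact Or.inl rfl
          · exact Or.inr he
      rw [hins, myOddVerts_symmDiff, myOddVerts_singleton h.ne, ih']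
      have huw : u ≠ w := h.ne
      have huv2 : u ≠ v := huv
      ext x
      simp only [Finset.mem_symmDiff, Finset.mem_insert, Finset.mem_singleton]
      by_cases h1 : x = u <;> by_cases h2 : x = v <;> by_cases h3 : x = w <;>
        simp_all

lemma myExists_oddVerts {H : SimpleGraph V} (hH : H.Connected) :
    ∀ n (T : Finset V), T.card = n → Even n →
      ∃ J : Finset (Sym2 V), ↑J ⊆ H.edgeSet ∧ oddVerts J = T := by
  intro n
  induction n using Nat.strong_induction_on with
  | _ n ih =>
    intro T hcard heven
    rcases Finset.eq_empty_or_nonempty T with rfl | ⟨t1, ht1⟩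
    · exact ⟨∅, by simp, myOddVerts_empty⟩
    · have hn2 : 2 ≤ n := by
        rcases heven with ⟨k, hk⟩
        have : 0 < T.card := Finset.card_pos.mpr ⟨t1, ht1⟩
        omega
      have hcard1 : 0 < (T.erase t1).card := by
        rw [Finset.card_erase_of_mem ht1]; omega
      obtain ⟨t2, ht2⟩ := Finset.card_pos.mp hcard1
      have ht2T : t2 ∈ T := Finset.mem_of_mem_erase ht2
      have ht12 : t1 ≠ t2 := fun hh => (Finset.ne_of_mem_erase ht2) hh.symm
      set T' := (T.erase t1).erase t2 with hT'
      have hT'card : T'.card = n - 2 := by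
        rw [hT', Finset.card_erase_of_mem ht2, Finset.card_erase_of_mem ht1, hcard]
        omega
      obtain ⟨J', hJ'sub, hJ'odd⟩ := ih (n - 2) (by omega) T' hT'card
        (by rcases heven with ⟨k, hk⟩; exact ⟨k - 1, by omega⟩)
      obtain ⟨w⟩ := hH.preconnected t1 t2
      set p := w.toPath.val with hpdef
      have hpath : p.IsPath := w.toPath.prop
      have hodds : oddVerts p.edges.toFinset = {t1, t2} := myOddVerts_walk p hpath ht12
      refine ⟨J' ∆ p.edges.toFinset, ?_, ?_⟩
      · intro e he
        rcases Finset.mem_symmDiff.mp he with ⟨h1, _⟩ | ⟨h1, _⟩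
        · exact hJ'sub h1
        · exact p.edges_subset_edgeSet (List.mem_toFinset.mp h1)
      · rw [myOddVerts_symmDiff, hJ'odd, hodds]
        have h1 : t1 ∉ T' := fun hh => (Finset.notMem_erase t1 T) (Finset.mem_of_mem_erase hh)
        have h2 : t2 ∉ T' := fun hh => (Finset.notMem_erase t2 (T.erase t1)) hh
        ext x
        simp only [Finset.mem_symmDiff, Finset.mem_insert, Finset.mem_singleton, hT',
          Finset.mem_erase]
        by_cases hx1 : x = t1 <;> by_cases hx2 : x = t2 <;> simp_all

end MyAux2

section MyAux3

open scoped symmDiff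

variable {V : Type*} [Fintype V] [DecidableEq V]

lemma myCard_oddVerts_singleton (e : Sym2 V) (h : ¬ e.IsDiag) :
    (oddVerts ({e} : Finset (Sym2 V))).card = 2 := by
  induction e using Sym2.ind with
  | _ a b =>
    have hab : a ≠ b := by simpa using h
    rw [myOddVerts_singleton hab, Finset.card_insert_of_notMem (by simpa using hab),
      Finset.card_singleton]

lemma myEven_card_oddVerts (J : Finset (Sym2 V)) (hJ : ∀ e ∈ J, ¬ e.IsDiag) :
    Even (oddVerts J).card := by
  induction J using Finset.induction_on with
  | empty => simp [myOddVerts_empty]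
  | @insert e S hnot ih =>
    have hins : insert e S = ({e} : Finset (Sym2 V)) ∆ S := by
      ext f
      simp only [Finset.mem_insert, Finset.mem_symmDiff, Finset.mem_singleton]
      constructor
      · rintro (rfl | hf)
        · exact Or.inl ⟨rfl, hnot⟩
        · by_cases hfe : f = e
          · exact Or.inl ⟨hfe, fun hh => hnot (hfe ▸ hh)⟩
          · exact Or.inr ⟨hf, hfe⟩
      · rintro (⟨rfl, _⟩ | ⟨hf, _⟩)
        · exact Or.inl rfl
        · exact Or.inr hf
    rw [hins, myOddVerts_symmDiff]
    rw [← ZMod.natCast_eq_zero_iff_even, myCard_symmDiff_cast, myCard_oddVerts_singleton e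
      (hJ e (Finset.mem_insert_self e S))]
    have := ih (fun f hf => hJ f (Finset.mem_insert_of_mem hf))
    rw [← ZMod.natCast_eq_zero_iff_even] at this
    rw [this]
    decide

lemma myTwo_mul_card_evens [Nonempty V] :
    2 * (Finset.univ.filter (fun S : Finset V => Even S.card)).card
      = 2 ^ Fintype.card V := by
  obtain ⟨v₀⟩ := ‹Nonempty V›
  set evens := Finset.univ.filter (fun S : Finset V => Even S.card) with hev
  set odds := Finset.univ.filter (fun S : Finset V => ¬ Even S.card) with hod
  have hcard : ∀ S : Finset V, ((S ∆ {v₀}).card : ZMod 2) = S.card + 1 := by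
    intro S
    rw [myCard_symmDiff_cast, Finset.card_singleton, Nat.cast_one]
  have hbij : evens.card = odds.card := by
    apply Finset.card_bij (fun S _ => S ∆ {v₀})
    · intro S hS
      rw [hev, Finset.mem_filter] at hS
      rw [hod, Finset.mem_filter]
      refine ⟨Finset.mem_univ _, ?_⟩
      rw [Nat.not_even_iff_odd, ← ZMod.natCast_eq_one_iff_odd, hcard,
        (ZMod.natCast_eq_zero_iff_even.mpr hS.2)]
      decide
    · intro S _ S' _ hEq
      have := congrArg (fun X => X ∆ ({v₀} : Finset V)) hEq
      simpa [symmDiff_symmDiff_cancel_right] using this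
    · intro S hS
      rw [hod, Finset.mem_filter] at hS
      refine ⟨S ∆ {v₀}, ?_, by simp [symmDiff_symmDiff_cancel_right]⟩
      rw [hev, Finset.mem_filter]
      refine ⟨Finset.mem_univ _, ?_⟩
      rw [← ZMod.natCast_eq_zero_iff_even, hcard,
        ZMod.natCast_eq_one_iff_odd.mpr (Nat.not_even_iff_odd.mp hS.2)]
      decide
  have htot : evens.card + odds.card = 2 ^ Fintype.card V := by
    rw [hev, hod, Finset.card_filter_add_card_filter_not]
    rw [Finset.card_univ, Fintype.card_finset]
  omega

end MyAux3


/-- every spanning tree of a connected graph contains exactly one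
`T`-join, for `T` of even cardinality. -/
theorem stmt2 {V : Type*} [Fintype V] [DecidableEq V]
    (G : SimpleGraph V) (hG : G.Connected)
    (T : Finset V) (hT : Even T.card)
    (F : Finset (Sym2 V)) (hF : IsSpanningTree G F) :
    ∃! J : Finset (Sym2 V), J ⊆ F ∧ IsTJoin G T J := by
  classical
  obtain ⟨hFsub, hFconn, hFcard⟩ := hF
  have hne : Nonempty V := hG.nonempty
  set H := SimpleGraph.fromEdgeSet (F : Set (Sym2 V)) with hH
  have hHF : H.edgeSet ⊆ ↑F := by
    rw [hH, SimpleGraph.edgeSet_fromEdgeSet]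
    exact Set.diff_subset
  have hndiag : ∀ e ∈ F, ¬ e.IsDiag := by
    intro e he
    have : e ∈ G.edgeSet := by
      have := hFsub he
      simpa [edgesOf] using this
    exact G.not_isDiag_of_mem_edgeSet this
  -- existence of a join inside F for any even set
  have hex : ∀ T₀ : Finset V, Even T₀.card →
      ∃ J : Finset (Sym2 V), J ⊆ F ∧ oddVerts J = T₀ := by
    intro T₀ hT₀
    obtain ⟨J, hJsub, hJodd⟩ := myExists_oddVerts hFconn T₀.card T₀ rfl hT₀
    exact ⟨J, fun e he => Finset.mem_coe.mp (hHF (hJsub he)), hJodd⟩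
  -- injectivity via counting
  set s := F.powerset with hs
  set t := Finset.univ.filter (fun S : Finset V => Even S.card) with ht
  have hmaps : ∀ J ∈ s, oddVerts J ∈ t := by
    intro J hJ
    rw [ht, Finset.mem_filter]
    exact ⟨Finset.mem_univ _,
      myEven_card_oddVerts J (fun e he => hndiag e (Finset.mem_powerset.mp hJ he))⟩
  have himage : s.image oddVerts = t := by
    apply Finset.Subset.antisymm
    · intro S hS
      obtain ⟨J, hJ, rfl⟩ := Finset.mem_image.mp hS
      exact hmaps J hJ
    · intro S hS
      rw [ht, Finset.mem_filter] at hS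
      obtain ⟨J, hJsub, hJodd⟩ := hex S hS.2
      exact Finset.mem_image.mpr ⟨J, Finset.mem_powerset.mpr hJsub, hJodd⟩
  have hcards : s.card = t.card := by
    have h1 : s.card = 2 ^ F.card := by rw [hs, Finset.card_powerset]
    have h2 : 2 * t.card = 2 ^ Fintype.card V := myTwo_mul_card_evens
    rw [← hFcard, pow_succ] at h2
    omega
  have hinj : Set.InjOn oddVerts (↑s : Set (Finset (Sym2 V))) :=
    Finset.injOn_of_card_image_eq (by rw [himage, hcards])
  -- assemble
  obtain ⟨J, hJsub, hJodd⟩ := hex T hT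
  refine ⟨J, ⟨hJsub, fun e he => hFsub (hJsub he), hJodd⟩, ?_⟩
  rintro J' ⟨hJ'sub, _, hJ'odd⟩
  exact hinj (Finset.mem_coe.mpr (Finset.mem_powerset.mpr hJ'sub))
    (Finset.mem_coe.mpr (Finset.mem_powerset.mpr hJsub)) (hJ'odd.trans hJodd.symm)
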